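/- If x ≠ y lie in the same one of the sets N_v − w, N_w − v, N_vw, then the adjacency between x and y is the same in ((G_cru^v)_cru^w)_cru^v as in G. -/

import Mathlib

/-- The six vertex marks of a multiply marked graph. -/
inductive Mark : Type
  | un | r | c | cr | u | ur
deriving DecidableEq

/-- A (multiply marked) graph: symmetric irreflexive adjacency, loops,
marks, and a number of free loops. -/
structure MGraph (V : Type) [DecidableEq V] : Type where
  adj : V → V → Bool
  adj_symm : ∀ x y, adj x y = adj y x
  adj_irrefl : ∀ x, adj x x = false
  loop : V → Bool
  mark : V → Mark
  freeLoops : ℕ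

namespace MGraph

variable {V : Type} [DecidableEq V]

/-- The mark change at `v` itself: unmarked↔u, r↔ur, c↔cr. -/
def flipV : Mark → Mark
  | .un => .u | .u => .un | .r => .ur | .ur => .r | .c => .cr | .cr => .c

/-- The mark change at neighbors of `v`: unmarked↔r, c↔ur, u↔cr. -/
def flipN : Mark → Mark
  | .un => .r | .r => .un | .c => .ur | .ur => .c | .u => .cr | .cr => .u

/-- The marked local complement `G_cru^v`. -/
def mlc (G : MGraph V) (v : V) : MGraph V where
  adj x y := if x ≠ y ∧ G.adj v x = true ∧ G.adj v y = true then !(G.adj x y) else G.adj x y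
  adj_symm := by
    intro x y
    try dsimp only
    by_cases h : x ≠ y ∧ G.adj v x = true ∧ G.adj v y = true
    · rw [if_pos h, if_pos ⟨h.1.symm, h.2.2, h.2.1⟩, G.adj_symm]
    · rw [if_neg h, if_neg (fun h' => h ⟨h'.1.symm, h'.2.2, h'.2.1⟩), G.adj_symm]
  adj_irrefl := by
    intro x
    try dsimp only
    rw [if_neg (fun h => h.1 rfl), G.adj_irrefl]
  loop := G.loop
  mark x := if x = v then flipV (G.mark x)
            else if G.adj v x = true then flipN (G.mark x) else G.mark x
  freeLoops := G.freeLoops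

end MGraph

namespace MGraph

variable {V : Type} [DecidableEq V]

/-- Membership in `N_v − w`: neighbors of `v` that are not neighbors of `w`,
other than `w` itself. -/
def inNv (G : MGraph V) (v w x : V) : Prop :=
  G.adj v x = true ∧ G.adj w x = false ∧ x ≠ w

/-- Membership in `N_w − v`: neighbors of `w` that are not neighbors of `v`,
other than `v` itself. -/
def inNw (G : MGraph V) (v w x : V) : Prop :=
  G.adj w x = true ∧ G.adj v x = false ∧ x ≠ v

/-- Membership in `N_vw`: common neighbors of `v` and `w`. -/
def inNvw (G : MGraph V) (v w x : V) : Prop :=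
  G.adj v x = true ∧ G.adj w x = true

/-- `x` and `y` lie in different elements of `{N_v − w, N_w − v, N_vw}`. -/
def diffClass (G : MGraph V) (v w x y : V) : Prop :=
  (G.inNv v w x ∧ (G.inNw v w y ∨ G.inNvw v w y)) ∨
  (G.inNw v w x ∧ (G.inNv v w y ∨ G.inNvw v w y)) ∨
  (G.inNvw v w x ∧ (G.inNv v w y ∨ G.inNw v w y))

end MGraph

/-- The mark change at the pivot vertices: c↔unmarked, r↔cr, u↔ur. -/
def pivotMark : Mark → Mark
  | .c => .un | .un => .c | .r => .cr | .cr => .r | .u => .ur | .ur => .u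


/-- if `x ≠ y` lie in the same one of the sets `N_v − w`,
`N_w − v`, `N_vw`, then their adjacency is the same in the marked pivot
`((G_cru^v)_cru^w)_cru^v` as in `G`. -/
theorem marked_pivot_same_class {V : Type} [DecidableEq V] (G : MGraph V)
    (v w : V) (hvw : v ≠ w) (hadj : G.adj v w = true) (x y : V) (hxy : x ≠ y)
    (hsame : (G.inNv v w x ∧ G.inNv v w y) ∨ (G.inNw v w x ∧ G.inNw v w y) ∨
      (G.inNvw v w x ∧ G.inNvw v w y)) :
    (((G.mlc v).mlc w).mlc v).adj x y = G.adj x y := by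

  have hwv : G.adj w v = true := by rw [G.adj_symm]; exact hadj
  have hvv := G.adj_irrefl v
  have hww := G.adj_irrefl w
  rcases hsame with ⟨⟨hvx, hwx, hxw⟩, hvy, hwy, hyw⟩ | ⟨⟨hwx, hvx, hxv⟩, hwy, hvy, hyv⟩ |
      ⟨⟨hvx, hwx⟩, hvy, hwy⟩
  · have hxv : x ≠ v := fun h => by rw [h, G.adj_irrefl] at hvx; exact Bool.false_ne_true hvx
    have hyv : y ≠ v := fun h => by rw [h, G.adj_irrefl] at hvy; exact Bool.false_ne_true hvy
    simp [MGraph.mlc, hvx, hvy, hwx, hwy, hadj, hwv, hvv, hww, hxy, hxv, hyv, hxw, hyw, hvw,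
      hxv.symm, hyv.symm, hxw.symm, hyw.symm, hvw.symm, hxy.symm]
  · have hxw : x ≠ w := fun h => by rw [h, G.adj_irrefl] at hwx; exact Bool.false_ne_true hwx
    have hyw : y ≠ w := fun h => by rw [h, G.adj_irrefl] at hwy; exact Bool.false_ne_true hwy
    simp [MGraph.mlc, hvx, hvy, hwx, hwy, hadj, hwv, hvv, hww, hxy, hxv, hyv, hxw, hyw, hvw,
      hxv.symm, hyv.symm, hxw.symm, hyw.symm, hvw.symm, hxy.symm]
  · have hxv : x ≠ v := fun h => by rw [h, G.adj_irrefl] at hvx; exact Bool.false_ne_true hvx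
    have hyv : y ≠ v := fun h => by rw [h, G.adj_irrefl] at hvy; exact Bool.false_ne_true hvy
    have hxw : x ≠ w := fun h => by rw [h, G.adj_irrefl] at hwx; exact Bool.false_ne_true hwx
    have hyw : y ≠ w := fun h => by rw [h, G.adj_irrefl] at hwy; exact Bool.false_ne_true hwy
    simp [MGraph.mlc, hvx, hvy, hwx, hwy, hadj, hwv, hvv, hww, hxy, hxv, hyv, hxw, hyw, hvw,
      hxv.symm, hyv.symm, hxw.symm, hyw.symm, hvw.symm, hxy.symm]
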